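/- Let Ω = diag(ω₁, ω₂, …) with ω_j > 0, c = (c_j) ∈ ℓ², γ > 0, and define on H = ℓ² × ℓ² the operator A(q,p) = (−iΩq + Ǎ(q+p), iΩp + Ǎ(q+p)) where Ǎx = −(γ/2)⟨c, x⟩ c (a rank-one perturbation). Then for λ = iω_k (some k), the vector equation (A − λI)(q,p) = (q̂,p̂) is solvable for every (q̂,p̂) ∈ H with explicit solution q_j = −(q̂_j − (c_j/c_k)p̂_k)/(iω_j + iω_k), p_j = (p̂_j − (c_j/c_k)p̂_k)/(iω_j − iω_k) for j ≠ k, and p_k = −(1/c_k)(2p̂_k/(γc_k) + Σ_ι c_ι q_ι + Σ_{ι≠k} c_ι p_ι); in particular iω_k belongs to the resolvent set of A when c_k ≠ 0. -/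

import Mathlib

set_option maxHeartbeats 1000000


open Complex

/-- If `‖f j‖ ≤ |u j| + |v j|` with `u, v ∈ ℓ²`, then `f ∈ ℓ²`. -/
lemma stmt18_l2_aux {u v : ℕ → ℝ} (hu : Summable (fun j => u j ^ 2))
    (hv : Summable (fun j => v j ^ 2)) {f : ℕ → ℂ}
    (h : ∀ j, ‖f j‖ ≤ |u j| + |v j|) : Summable (fun j => ‖f j‖ ^ 2) := by
  refine Summable.of_nonneg_of_le (fun j => by positivity) (fun j => ?_)
    ((hu.add hv).mul_left 2)
  have h1 : ‖f j‖ ^ 2 ≤ (|u j| + |v j|) ^ 2 := by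
    have := h j
    nlinarith [norm_nonneg (f j), abs_nonneg (u j), abs_nonneg (v j)]
  nlinarith [_root_.sq_abs (u j), _root_.sq_abs (v j), sq_nonneg (|u j| - |v j|)]

/-- If `a ∈ ℓ²` and `f ∈ ℓ²`, then `a·f` is summable. -/
lemma stmt18_mul_aux {a : ℕ → ℝ} {f : ℕ → ℂ} (ha : Summable (fun j => a j ^ 2))
    (hf : Summable (fun j => ‖f j‖ ^ 2)) : Summable (fun j => (a j : ℂ) * f j) := by
  apply Summable.of_norm
  refine Summable.of_nonneg_of_le (fun j => norm_nonneg _) (fun j => ?_)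
    ((ha.add hf).mul_left (1/2))
  have h1 : ‖(a j : ℂ) * f j‖ = |a j| * ‖f j‖ := by
    simp [norm_mul]
  rw [h1]
  nlinarith [sq_nonneg (|a j| - ‖f j‖), _root_.sq_abs (a j), norm_nonneg (f j), abs_nonneg (a j)]

/-- The point `iω_k` belongs to the resolvent set of the rank-one-perturbed
generator `A`: the equation `(A - iω_k I)(q,p) = (q̂,p̂)` is solvable for every
`(q̂,p̂) ∈ ℓ² × ℓ²`, with the explicit solution formulas. -/
theorem stmt_18 (ω c : ℕ → ℝ) (hω : StrictMono ω) (hωpos : ∀ j, 0 < ω j)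
    (hc2 : Summable (fun j => (c j) ^ 2))
    (γ : ℝ) (hγ : 0 < γ) (k : ℕ) (hck : c k ≠ 0)
    (qhat phat : ℕ → ℂ)
    (hqhat : Summable (fun j => ‖qhat j‖ ^ 2))
    (hphat : Summable (fun j => ‖phat j‖ ^ 2))
    (q p : ℕ → ℂ)
    (hq : ∀ j, q j = -(qhat j - ((c j : ℂ) / (c k : ℂ)) * phat k) /
      (Complex.I * (ω j : ℂ) + Complex.I * (ω k : ℂ)))
    (hp : ∀ j, p j = if j = k then
        -(1 / (c k : ℂ)) * (2 * phat k / ((γ : ℂ) * (c k : ℂ))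
          + (∑' ι, (c ι : ℂ) * q ι)
          + ∑' ι, if ι = k then 0 else (c ι : ℂ) * p ι)
      else (phat j - ((c j : ℂ) / (c k : ℂ)) * phat k) /
        (Complex.I * (ω j : ℂ) - Complex.I * (ω k : ℂ))) :
    Summable (fun j => ‖q j‖ ^ 2) ∧ Summable (fun j => ‖p j‖ ^ 2) ∧
    Summable (fun ι => (c ι : ℂ) * (q ι + p ι)) ∧
    (∀ j, (-(Complex.I * (ω j : ℂ)) - Complex.I * (ω k : ℂ)) * q j
        - ((γ : ℂ) / 2) * (∑' ι, (c ι : ℂ) * (q ι + p ι)) * (c j : ℂ) = qhat j) ∧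
    (∀ j, (Complex.I * (ω j : ℂ) - Complex.I * (ω k : ℂ)) * p j
        - ((γ : ℂ) / 2) * (∑' ι, (c ι : ℂ) * (q ι + p ι)) * (c j : ℂ) = phat j) := by
  have hckC : ((c k : ℂ)) ≠ 0 := Complex.ofReal_ne_zero.mpr hck
  have hγC : ((γ : ℂ)) ≠ 0 := Complex.ofReal_ne_zero.mpr hγ.ne'
  have hωk := hωpos k
  set M : ℝ := ‖phat k‖ / |c k| with hM
  have hMnn : 0 ≤ M := by positivity
  -- nonvanishing of denominators
  have hden1 : ∀ j, Complex.I * (ω j : ℂ) + Complex.I * (ω k : ℂ) ≠ 0 := by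
    intro j
    have h1 : Complex.I * (ω j : ℂ) + Complex.I * (ω k : ℂ)
        = Complex.I * ((ω j + ω k : ℝ) : ℂ) := by push_cast; ring
    rw [h1]
    exact mul_ne_zero Complex.I_ne_zero
      (Complex.ofReal_ne_zero.mpr (by have := hωpos j; positivity))
  have hden2 : ∀ j, j ≠ k → Complex.I * (ω j : ℂ) - Complex.I * (ω k : ℂ) ≠ 0 := by
    intro j hj
    have h1 : Complex.I * (ω j : ℂ) - Complex.I * (ω k : ℂ)
        = Complex.I * ((ω j - ω k : ℝ) : ℂ) := by push_cast; ring
    rw [h1]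
    refine mul_ne_zero Complex.I_ne_zero (Complex.ofReal_ne_zero.mpr (sub_ne_zero.2 ?_))
    exact fun h => hj (hω.injective h)
  -- uniform gap for j ≠ k
  obtain ⟨δ, hδpos, hδ⟩ : ∃ δ : ℝ, 0 < δ ∧ ∀ j, j ≠ k → δ ≤ |ω j - ω k| := by
    refine ⟨min (ω (k+1) - ω k) (if h : k = 0 then 1 else ω k - ω (k-1)), ?_, ?_⟩
    · refine lt_min (sub_pos.2 (hω (Nat.lt_succ_self k))) ?_
      split_ifs with h
      · norm_num
      · exact sub_pos.2 (hω (by omega))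
    · intro j hj
      rcases lt_or_gt_of_ne hj with h | h
      · have hk0 : k ≠ 0 := by omega
        have h1 : ω j ≤ ω (k-1) := hω.monotone (by omega)
        have h2 : ω j < ω k := hω h
        rw [abs_sub_comm, _root_.abs_of_pos (sub_pos.2 h2)]
        calc min (ω (k+1) - ω k) (if h : k = 0 then 1 else ω k - ω (k-1))
            ≤ (if h : k = 0 then 1 else ω k - ω (k-1)) := min_le_right _ _
          _ = ω k - ω (k-1) := by rw [dif_neg hk0]
          _ ≤ ω k - ω j := by linarith
      · have h1 : ω (k+1) ≤ ω j := hω.monotone h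
        have h2 : ω k < ω j := hω h
        rw [_root_.abs_of_pos (sub_pos.2 h2)]
        calc min (ω (k+1) - ω k) _ ≤ ω (k+1) - ω k := min_le_left _ _
          _ ≤ ω j - ω k := by linarith
  -- ℓ² bound for q
  have hQ2 : Summable (fun j => ‖q j‖ ^ 2) := by
    have hu : Summable (fun j => (‖qhat j‖ / ω k) ^ 2) := by
      simpa [div_eq_mul_inv, mul_pow, inv_pow] using hqhat.mul_right (((ω k) ^ 2)⁻¹)
    have hv : Summable (fun j => (c j * (M / ω k)) ^ 2) := by
      simpa [mul_pow] using hc2.mul_right ((M / ω k) ^ 2)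
    refine stmt18_l2_aux hu hv (fun j => ?_)
    have hnum : ‖qhat j - ((c j : ℂ) / (c k : ℂ)) * phat k‖ ≤ ‖qhat j‖ + |c j| * M := by
      refine (norm_sub_le _ _).trans ?_
      have : ‖((c j : ℂ) / (c k : ℂ)) * phat k‖ = |c j| * M := by
        rw [norm_mul, norm_div]
        simp [hM]
        ring
      rw [this]
    have hden : ‖Complex.I * (ω j : ℂ) + Complex.I * (ω k : ℂ)‖ = ω j + ω k := by
      have h1 : Complex.I * (ω j : ℂ) + Complex.I * (ω k : ℂ)
          = Complex.I * ((ω j + ω k : ℝ) : ℂ) := by push_cast; ring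
      rw [h1, norm_mul, Complex.norm_I, one_mul, Complex.norm_real]
      exact Real.norm_of_nonneg (by have := hωpos j; positivity)
    have hq' : ‖q j‖ = ‖qhat j - ((c j : ℂ) / (c k : ℂ)) * phat k‖ / (ω j + ω k) := by
      rw [hq j, norm_div, norm_neg, hden]
    rw [hq']
    have h2 : ‖qhat j - ((c j : ℂ) / (c k : ℂ)) * phat k‖ / (ω j + ω k)
        ≤ (‖qhat j‖ + |c j| * M) / ω k := by
      apply div_le_div₀ (by positivity) hnum hωk
      have := (hωpos j).le
      linarith
    refine h2.trans ?_
    have e1 : |‖qhat j‖ / ω k| = ‖qhat j‖ / ω k := _root_.abs_of_nonneg (by positivity)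
    have e2 : |c j * (M / ω k)| = |c j| * (M / ω k) := by
      rw [abs_mul, _root_.abs_of_nonneg (show (0:ℝ) ≤ M / ω k by positivity)]
    rw [e1, e2]
    rw [add_div]
    have : |c j| * M / ω k = |c j| * (M / ω k) := by ring
    rw [this]
  -- ℓ² bound for p away from k
  have hP2' : Summable (fun j => ‖(if j = k then 0 else p j : ℂ)‖ ^ 2) := by
    have hu : Summable (fun j => (‖phat j‖ / δ) ^ 2) := by
      simpa [div_eq_mul_inv, mul_pow, inv_pow] using hphat.mul_right ((δ ^ 2)⁻¹)
    have hv : Summable (fun j => (c j * (M / δ)) ^ 2) := by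
      simpa [mul_pow] using hc2.mul_right ((M / δ) ^ 2)
    refine stmt18_l2_aux hu hv (fun j => ?_)
    by_cases hj : j = k
    · simp [hj]
      positivity
    · rw [if_neg hj]
      have hnum : ‖phat j - ((c j : ℂ) / (c k : ℂ)) * phat k‖ ≤ ‖phat j‖ + |c j| * M := by
        refine (norm_sub_le _ _).trans ?_
        have : ‖((c j : ℂ) / (c k : ℂ)) * phat k‖ = |c j| * M := by
          rw [norm_mul, norm_div]
          simp [hM]
          ring
        rw [this]
      have hden : ‖Complex.I * (ω j : ℂ) - Complex.I * (ω k : ℂ)‖ = |ω j - ω k| := by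
        have h1 : Complex.I * (ω j : ℂ) - Complex.I * (ω k : ℂ)
            = Complex.I * ((ω j - ω k : ℝ) : ℂ) := by push_cast; ring
        rw [h1, norm_mul, Complex.norm_I, one_mul, Complex.norm_real, Real.norm_eq_abs]
      have hp' : ‖p j‖ = ‖phat j - ((c j : ℂ) / (c k : ℂ)) * phat k‖ / |ω j - ω k| := by
        rw [hp j, if_neg hj, norm_div, hden]
      rw [hp']
      have h2 : ‖phat j - ((c j : ℂ) / (c k : ℂ)) * phat k‖ / |ω j - ω k|
          ≤ (‖phat j‖ + |c j| * M) / δ := by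
        exact div_le_div₀ (by positivity) hnum hδpos (hδ j hj)
      refine h2.trans ?_
      have e1 : |‖phat j‖ / δ| = ‖phat j‖ / δ := _root_.abs_of_nonneg (by positivity)
      have e2 : |c j * (M / δ)| = |c j| * (M / δ) := by
        rw [abs_mul, _root_.abs_of_nonneg (show (0:ℝ) ≤ M / δ by positivity)]
      rw [e1, e2, add_div]
      have : |c j| * M / δ = |c j| * (M / δ) := by ring
      rw [this]
  have hP2 : Summable (fun j => ‖p j‖ ^ 2) := by
    have hsingle : Summable (fun j => if j = k then ‖p k‖ ^ 2 else 0) := by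
      apply summable_of_ne_finset_zero (s := {k})
      intro b hb
      simp at hb
      simp [hb]
    refine (hP2'.add hsingle).congr (fun j => ?_)
    by_cases hj : j = k <;> simp [hj]
  -- summability of the coupling sums
  have hcq : Summable (fun ι => (c ι : ℂ) * q ι) := stmt18_mul_aux hc2 hQ2
  have hcp : Summable (fun ι => (c ι : ℂ) * p ι) := stmt18_mul_aux hc2 hP2
  have hcqp : Summable (fun ι => (c ι : ℂ) * (q ι + p ι)) := by
    refine (hcq.add hcp).congr (fun ι => ?_)
    ring
  -- value of the coupling sum
  have hS : (∑' ι, (c ι : ℂ) * (q ι + p ι)) = -(2 * phat k / ((γ : ℂ) * (c k : ℂ))) := by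
    have h1 : (∑' ι, (c ι : ℂ) * (q ι + p ι))
        = (∑' ι, (c ι : ℂ) * q ι) + ∑' ι, (c ι : ℂ) * p ι := by
      rw [← Summable.tsum_add hcq hcp]
      exact tsum_congr fun ι => mul_add _ _ _
    have h2 : (∑' ι, (c ι : ℂ) * p ι)
        = (c k : ℂ) * p k + ∑' ι, if ι = k then 0 else (c ι : ℂ) * p ι :=
      Summable.tsum_eq_add_tsum_ite hcp k
    have h3 : (c k : ℂ) * p k = -(2 * phat k / ((γ : ℂ) * (c k : ℂ))
        + (∑' ι, (c ι : ℂ) * q ι)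
        + ∑' ι, if ι = k then 0 else (c ι : ℂ) * p ι) := by
      rw [hp k, if_pos rfl]
      field_simp
    rw [h1, h2, h3]
    ring
  refine ⟨hQ2, hP2, hcqp, ?_, ?_⟩
  · intro j
    rw [hS, hq j]
    have hjk : ((ω j : ℂ) + (ω k : ℂ)) ≠ 0 := by
      exact_mod_cast (by have := hωpos j; linarith : ω j + ω k ≠ 0)
    field_simp [hden1 j, hjk]
    ring
  · intro j
    by_cases hj : j = k
    · subst hj
      rw [hS]
      field_simp
      ring
    · rw [hS, hp j, if_neg hj]
      have hjk : ((ω j : ℂ) - (ω k : ℂ)) ≠ 0 :=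
        sub_ne_zero.2 (fun h => hj (hω.injective (Complex.ofReal_injective h)))
      field_simp [hden2 j hj, hjk]
      ring
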